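/- In the polynomial ring ℚ[p_{11},p_{12},p_{21},p_{22}], let q_1 = 2p_{22}(p_{11}+p_{12}) − 3p_{11}(p_{21}+p_{22}) and q_2 = 3p_{22}(p_{11}+p_{21}) − 2p_{11}(p_{12}+p_{22}). Then the ideal ⟨q_1, q_2⟩ equals the intersection ⟨p_{11}, p_{22}⟩ ∩ ⟨2p_{12}+3p_{21}, 3p_{11}p_{21}+p_{11}p_{22}+3p_{21}p_{22}⟩ ∩ ⟨2p_{12}−3p_{21}−p_{22}, p_{11}−p_{22}⟩, and each of the three ideals on the right-hand side is a prime ideal. -/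

import Mathlib

open MvPolynomial

/-- The variable `p₁₁` in `ℚ[p₁₁,p₁₂,p₂₁,p₂₂]`. -/
noncomputable def r11 : MvPolynomial (Fin 4) ℚ := X 0
/-- The variable `p₁₂`. -/
noncomputable def r12 : MvPolynomial (Fin 4) ℚ := X 1
/-- The variable `p₂₁`. -/
noncomputable def r21 : MvPolynomial (Fin 4) ℚ := X 2
/-- The variable `p₂₂`. -/
noncomputable def r22 : MvPolynomial (Fin 4) ℚ := X 3

set_option synthInstance.maxHeartbeats 1000000

namespace BoSAux
noncomputable section



lemma sub_aeval_mem {n : ℕ} (g : Fin n → MvPolynomial (Fin n) ℚ) (f : MvPolynomial (Fin n) ℚ) :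
    f - aeval g f ∈ Ideal.span (Set.range fun i => (X i : MvPolynomial (Fin n) ℚ) - g i) := by
  induction f using MvPolynomial.induction_on with
  | C a => simp [algebraMap_eq]
  | add p q hp hq =>
      have : p + q - aeval g (p + q) = (p - aeval g p) + (q - aeval g q) := by
        rw [map_add]; ring
      rw [this]; exact Ideal.add_mem _ hp hq
  | mul_X p i hp =>
      have : p * X i - aeval g (p * X i)
          = (p - aeval g p) * X i + aeval g p * (X i - g i) := by
        rw [map_mul, aeval_X]; ring
      rw [this]
      exact Ideal.add_mem _ (Ideal.mul_mem_right _ _ hp)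
        (Ideal.mul_mem_left _ _ (Ideal.subset_span ⟨i, rfl⟩))

lemma prime_X_mv : ∀ (n : ℕ) (i : Fin n), Prime (X i : MvPolynomial (Fin n) ℚ)
  | 0, i => i.elim0
  | (n+1), i => by
      induction i using Fin.cases with
      | zero =>
          rw [← MulEquiv.prime_iff (finSuccEquiv ℚ n).toMulEquiv]
          have : (finSuccEquiv ℚ n) (X 0) = Polynomial.X := finSuccEquiv_X_zero
          simp only [MulEquiv.coe_mk, AlgEquiv.toEquiv_eq_coe, EquivLike.coe_coe] at *
          rw [this]
          exact Polynomial.prime_X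
      | succ j =>
          rw [← MulEquiv.prime_iff (finSuccEquiv ℚ n).toMulEquiv]
          have : (finSuccEquiv ℚ n) (X j.succ) = Polynomial.C (X j) := finSuccEquiv_X_succ
          simp only [MulEquiv.coe_mk, AlgEquiv.toEquiv_eq_coe, EquivLike.coe_coe] at *
          rw [this, Polynomial.prime_C_iff]
          exact prime_X_mv n j

-- nonzero helpers
lemma X_ne_zero_mv {n : ℕ} (i : Fin n) : (X i : MvPolynomial (Fin n) ℚ) ≠ 0 :=
  (prime_X_mv n i).1

lemma irreducible_q :
    Irreducible (Polynomial.C (X 2) * Polynomial.X + Polynomial.C (-(9 * (X 1)^2)) :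
      Polynomial (MvPolynomial (Fin 3) ℚ)) := by
  set S := MvPolynomial (Fin 3) ℚ
  have hX2 : (X 2 : S) ≠ 0 := X_ne_zero_mv 2
  have hdeg : (Polynomial.C (X 2 : S) * Polynomial.X +
      Polynomial.C (-(9 * (X 1)^2))).natDegree = 1 := Polynomial.natDegree_linear hX2
  constructor
  · intro hu
    have := Polynomial.natDegree_eq_zero_of_isUnit hu
    omega
  · intro f g hfg
    have hf0 : f ≠ 0 := by
      rintro rfl
      rw [zero_mul] at hfg
      rw [hfg] at hdeg
      simp at hdeg
    have hg0 : g ≠ 0 := by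
      rintro rfl
      rw [mul_zero] at hfg
      rw [hfg] at hdeg
      simp at hdeg
    have hsum : f.natDegree + g.natDegree = 1 := by
      rw [hfg] at hdeg
      rw [Polynomial.natDegree_mul hf0 hg0] at hdeg
      exact hdeg
    -- helper: if a factor has natDegree 0 it is a unit
    have key : ∀ u v : Polynomial S,
        Polynomial.C (X 2 : S) * Polynomial.X + Polynomial.C (-(9 * (X 1)^2)) = u * v →
        u.natDegree = 0 → IsUnit u := by
      intro u v huv hu0
      obtain ⟨a, rfl⟩ := Polynomial.natDegree_eq_zero.mp hu0
      have hdvd : Polynomial.C a ∣ Polynomial.C (X 2 : S) * Polynomial.X +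
          Polynomial.C (-(9 * (X 1)^2)) := ⟨v, huv⟩
      rw [Polynomial.C_dvd_iff_dvd_coeff] at hdvd
      have h1 : a ∣ (X 2 : S) := by
        have := hdvd 1
        simp only [Polynomial.coeff_add, Polynomial.coeff_C_mul, Polynomial.coeff_X_one,
          Polynomial.coeff_C, mul_one, if_neg (by norm_num : ¬ (1:ℕ) = 0), add_zero] at this
        exact this
      have h0 : a ∣ (-(9 * (X 1 : S)^2)) := by
        have := hdvd 0
        simp only [Polynomial.coeff_add, Polynomial.coeff_C_mul, Polynomial.coeff_X_zero,
          Polynomial.coeff_C, mul_zero, if_pos rfl, zero_add] at this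
        exact this
      rw [Polynomial.isUnit_C]
      -- X 2 is prime
      have hp := prime_X_mv 3 2
      obtain ⟨t, ht⟩ := h1
      rcases hp.2.2 a t (ht ▸ dvd_rfl) with hXa | hXt
      · -- X 2 ∣ a, so X 2 ∣ 9 * X1^2 : contradiction
        exfalso
        have : (X 2 : S) ∣ (-(9 * (X 1)^2)) := dvd_trans hXa h0
        obtain ⟨w, hw⟩ := this
        -- evaluate at X2 ↦ 0
        have h9 := congrArg (aeval (![X 0, X 1, 0] : Fin 3 → S)) hw
        simp only [map_neg, map_mul, map_pow, aeval_X, map_ofNat,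
          Matrix.cons_val_zero, Matrix.cons_val_one, Matrix.head_cons,
          Matrix.cons_val_two, Matrix.tail_cons, zero_mul, mul_zero] at h9
        have := congrArg (eval (fun _ : Fin 3 => (1:ℚ))) h9
        simp at this
      · -- X 2 ∣ t : then a is a unit
        obtain ⟨w, hw⟩ := hXt
        rw [hw, mul_comm a, mul_assoc] at ht
        have h1eq : (1 : S) = w * a :=
          mul_left_cancel₀ hX2 (by rw [mul_one]; exact ht)
        exact IsUnit.of_mul_eq_one (a := a) w (by rw [mul_comm]; exact h1eq.symm)
    rcases Nat.add_eq_one_iff.mp hsum with ⟨hf1, hg1⟩ | ⟨hf1, hg1⟩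
    · exact Or.inl (key f g hfg hf1)
    · exact Or.inr (key g f (by rw [hfg, mul_comm]) hg1)



abbrev R4 : Type := MvPolynomial (Fin 4) ℚ

lemma prime_quadric : Prime (X 0 * X 3 - 9 * (X 2)^2 : R4) := by
  have hq : Prime (Polynomial.C (X 2) * Polynomial.X + Polynomial.C (-(9 * (X 1)^2)) :
      Polynomial (MvPolynomial (Fin 3) ℚ)) :=
    (UniqueFactorizationMonoid.irreducible_iff_prime).mp irreducible_q
  rw [← MulEquiv.prime_iff (finSuccEquiv ℚ 3).toMulEquiv]
  have h3 : (3 : Fin 4) = Fin.succ 2 := by decide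
  have h2 : (2 : Fin 4) = Fin.succ 1 := by decide
  have himg : (finSuccEquiv ℚ 3) (X 0 * X 3 - 9 * (X 2)^2 : R4)
      = Polynomial.C (X 2) * Polynomial.X + Polynomial.C (-(9 * (X 1)^2)) := by
    rw [h3, h2]
    simp only [map_sub, map_mul, map_pow, map_ofNat, map_neg,
      finSuccEquiv_X_zero, finSuccEquiv_X_succ]
    ring
  simpa [himg] using hq

def h2p : R4 := 3 * X 0 * X 2 + X 0 * X 3 + 3 * X 2 * X 3

def eFwd : R4 →ₐ[ℚ] R4 := aeval ![X 0 - 3 * X 2, X 1, X 2, X 3 - 3 * X 2]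
def eBwd : R4 →ₐ[ℚ] R4 := aeval ![X 0 + 3 * X 2, X 1, X 2, X 3 + 3 * X 2]

def eAut : R4 ≃ₐ[ℚ] R4 := by
  refine AlgEquiv.ofAlgHom eFwd eBwd ?_ ?_ <;>
  · apply MvPolynomial.algHom_ext
    intro i
    fin_cases i <;>
      simp [eFwd, eBwd, map_ofNat, Matrix.cons_val_zero, Matrix.cons_val_one] <;> ring

lemma prime_h2p : Prime h2p := by
  rw [← MulEquiv.prime_iff (eAut : R4 ≃ₐ[ℚ] R4).toMulEquiv]
  have : (eAut : R4 ≃ₐ[ℚ] R4) h2p = X 0 * X 3 - 9 * (X 2)^2 := by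
    show eFwd h2p = _
    simp only [h2p, eFwd, map_add, map_mul, map_ofNat, aeval_X,
      Matrix.cons_val_zero, Matrix.cons_val_one, Matrix.head_cons,
      Matrix.cons_val_two, Matrix.tail_cons, Matrix.cons_val_three]
    ring
  simp only [MulEquiv.coe_mk, AlgEquiv.toEquiv_eq_coe, EquivLike.coe_coe]
  rw [this]
  exact prime_quadric


abbrev R2 : Type := MvPolynomial (Fin 2) ℚ
abbrev KF : Type := FractionRing R2


def g2p : R4 := 2 * X 1 + 3 * X 2
def I2 : Ideal R4 := Ideal.span {g2p, h2p}


def ι2 : R2 →ₐ[ℚ] R4 := aeval ![X 0, X 2]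
def σy : R4 →ₐ[ℚ] R4 := aeval ![X 0, C (-3/2 : ℚ) * X 2, X 2, X 3]

lemma hι0 : ι2 (X 0) = X 0 := by simp [ι2]
lemma hι1 : ι2 (X 1) = X 2 := by simp [ι2]
lemma hιC (a : ℚ) : ι2 (C a) = C a := by simp [ι2, algebraMap_eq]

lemma hC2 : (2 : R4) * C (1/2 : ℚ) = 1 := by
  rw [← map_ofNat (C : ℚ →+* R4) 2, ← map_mul]; norm_num
lemma hC32 : (C (3/2 : ℚ) : R4) = 3 * C (1/2 : ℚ) := by
  rw [show (3/2 : ℚ) = 3 * (1/2) by norm_num, map_mul, map_ofNat]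
lemma hCn32 : (C (-3/2 : ℚ) : R4) = -3 * C (1/2 : ℚ) := by
  rw [show (-3/2 : ℚ) = -3 * (1/2) by norm_num, map_mul, map_neg, map_ofNat]
lemma hCn3 : (C (-3 : ℚ) : R4) = -3 := by
  rw [map_neg, map_ofNat]

lemma σy_X0 : σy (X 0) = X 0 := by simp [σy]
lemma σy_X1 : σy (X 1) = C (-3/2 : ℚ) * X 2 := by simp [σy]
lemma σy_X2 : σy (X 2) = X 2 := by simp [σy]
lemma σy_X3 : σy (X 3) = X 3 := by simp [σy]

lemma σy_g2p : σy g2p = 0 := by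
  unfold g2p
  rw [map_add, map_mul, map_mul, σy_X1, σy_X2, map_ofNat, map_ofNat]
  linear_combination (2 * X 2 : R4) * hCn32 - (3 * X 2 : R4) * hC2

lemma σy_h2p : σy h2p = h2p := by
  unfold h2p
  simp only [map_add, map_mul, map_ofNat, σy_X0, σy_X2, σy_X3]

lemma div_lemma (f : R4) : ∃ (N : ℕ) (A Q : R4) (r : R2),
    (X 0 + 3 * X 2)^N * f = A * g2p + Q * h2p + ι2 r := by
  induction f using MvPolynomial.induction_on with
  | C a =>
      exact ⟨0, 0, 0, C a, by simp [hιC]⟩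
  | add p q hp hq =>
      obtain ⟨N1, A1, Q1, r1, h1⟩ := hp
      obtain ⟨N2, A2, Q2, r2, h2⟩ := hq
      refine ⟨N1 + N2, (X 0 + 3*X 2)^N2 * A1 + (X 0 + 3*X 2)^N1 * A2,
        (X 0 + 3*X 2)^N2 * Q1 + (X 0 + 3*X 2)^N1 * Q2,
        (X 0 + 3*X 1)^N2 * r1 + (X 0 + 3*X 1)^N1 * r2, ?_⟩
      have e1 : ι2 ((X 0 + 3*X 1)^N2 * r1 + (X 0 + 3*X 1)^N1 * r2)
          = (X 0 + 3*X 2)^N2 * ι2 r1 + (X 0 + 3*X 2)^N1 * ι2 r2 := by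
        simp [map_add, map_mul, map_pow, map_ofNat, hι0, hι1]
      rw [e1]
      linear_combination ((X 0 + 3*X 2 : R4)^N2) * h1 + ((X 0 + 3*X 2 : R4)^N1) * h2
  | mul_X p i hp =>
      obtain ⟨N, A, Q, r, h⟩ := hp
      fin_cases i <;>
        simp only [Fin.zero_eta, Fin.mk_one, show (⟨2, by omega⟩ : Fin 4) = 2 from rfl,
          show (⟨3, by omega⟩ : Fin 4) = 3 from rfl]
      · refine ⟨N, A * X 0, Q * X 0, r * X 0, ?_⟩
        rw [map_mul, hι0]
        linear_combination (X 0 : R4) * h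
      · refine ⟨N, A * X 1 + C (1/2 : ℚ) * ι2 r, Q * X 1, C (-3/2 : ℚ) * r * X 1, ?_⟩
        have e1 : ι2 (C (-3/2 : ℚ) * r * X 1) = C (-3/2 : ℚ) * ι2 r * X 2 := by
          rw [map_mul, map_mul, hι1, hιC]
        rw [e1, hCn32]
        unfold g2p h2p at *
        linear_combination (X 1 : R4) * h - (X 1 * ι2 r) * hC2
      · refine ⟨N, A * X 2, Q * X 2, r * X 1, ?_⟩
        rw [map_mul, hι1]
        linear_combination (X 2 : R4) * h
      · refine ⟨N + 1, A * ((X 0 + 3*X 2) * X 3), Q * ((X 0 + 3*X 2) * X 3) + ι2 r,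
          C (-3 : ℚ) * r * X 0 * X 1, ?_⟩
        have e1 : ι2 (C (-3 : ℚ) * r * X 0 * X 1) = C (-3 : ℚ) * ι2 r * X 0 * X 2 := by
          rw [map_mul, map_mul, map_mul, hι0, hι1, hιC]
        rw [e1, hCn3]
        unfold g2p h2p at *
        linear_combination ((X 0 + 3*X 2 : R4) * X 3) * h

lemma sub_σy_mem (f : R4) : f - σy f ∈ Ideal.span {g2p} := by
  refine Ideal.span_le.mpr ?_ (sub_aeval_mem _ f)
  rintro _ ⟨i, rfl⟩
  fin_cases i <;>
    simp only [Fin.zero_eta, Fin.mk_one, show (⟨2, by omega⟩ : Fin 4) = 2 from rfl,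
      show (⟨3, by omega⟩ : Fin 4) = 3 from rfl, Matrix.cons_val_zero, Matrix.cons_val_one,
      Matrix.head_cons, Matrix.cons_val_two, Matrix.tail_cons, Matrix.cons_val_three,
      sub_self, SetLike.mem_coe]
  · exact Ideal.zero_mem _
  · rw [Ideal.mem_span_singleton]
    refine ⟨C (1/2 : ℚ), ?_⟩
    unfold g2p
    linear_combination (-(X 1) : R4) * hC2 - (X 2 : R4) * hCn32
  · exact Ideal.zero_mem _
  · exact Ideal.zero_mem _

lemma sat_step (f : R4) (hf : (X 0 + 3 * X 2) * f ∈ I2) : f ∈ I2 := by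
  obtain ⟨A, B, hAB⟩ := Ideal.mem_span_pair.mp hf
  have happ := congrArg σy hAB
  rw [map_add, map_mul, map_mul, map_mul, map_add, map_mul, σy_g2p, σy_h2p, mul_zero,
    zero_add, σy_X0, σy_X2, map_ofNat] at happ
  -- happ : σy B * h2p = (X 0 + 3 * X 2) * σy f
  have hdvd : h2p ∣ (X 0 + 3 * X 2) * σy f := ⟨σy B, by rw [← happ]; ring⟩
  rcases prime_h2p.2.2 _ _ hdvd with hc | hf2
  · exfalso
    obtain ⟨t, ht⟩ := hc
    have := congrArg (eval ![1, 0, 0, 0]) ht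
    simp [h2p] at this
  · obtain ⟨t, ht⟩ := hf2
    have : f = (f - σy f) + h2p * t := by rw [← ht]; ring
    rw [this]
    refine Ideal.add_mem _ ?_ ?_
    · refine Ideal.span_mono ?_ (sub_σy_mem f)
      intro x hx; rw [hx]; exact Set.mem_insert _ _
    · exact Ideal.mul_mem_right _ _ (Ideal.subset_span (Set.mem_insert_of_mem _ rfl))

lemma sat (n : ℕ) (f : R4) (hf : (X 0 + 3 * X 2)^n * f ∈ I2) : f ∈ I2 := by
  induction n generalizing f with
  | zero => simpa using hf
  | succ n ih =>
      apply sat_step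
      apply ih
      rw [pow_succ, mul_assoc] at hf
      exact hf

-- the parametrization map
def amK : R2 →+* KF := algebraMap R2 KF
def fQ : ℚ →+* KF := amK.comp (C : ℚ →+* R2)
def φ2 : R4 →+* KF :=
  eval₂Hom fQ ![amK (X 0), fQ (-3/2) * amK (X 1), amK (X 1),
    (-3 * amK (X 0) * amK (X 1)) / (amK (X 0) + 3 * amK (X 1))]

lemma amK_inj : Function.Injective amK := IsFractionRing.injective R2 KF

lemma φ2_X0 : φ2 (X 0) = amK (X 0) := by simp [φ2]
lemma φ2_X1 : φ2 (X 1) = fQ (-3/2) * amK (X 1) := by simp [φ2]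
lemma φ2_X2 : φ2 (X 2) = amK (X 1) := by simp [φ2]
lemma φ2_X3 : φ2 (X 3) = (-3 * amK (X 0) * amK (X 1)) / (amK (X 0) + 3 * amK (X 1)) := by
  simp [φ2]
lemma φ2_C (a : ℚ) : φ2 (C a) = fQ a := by simp [φ2]
lemma amK_C (a : ℚ) : amK (C a) = fQ a := rfl
lemma fQ_cast (a : ℚ) : (fQ a : KF) = (a : KF) := eq_ratCast fQ a

lemma φ2_g2p : φ2 g2p = 0 := by
  unfold g2p
  simp only [map_add, map_mul, map_ofNat, φ2_X1, φ2_X2, fQ_cast]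
  push_cast
  ring

lemma denom_ne : (amK (X 0) + 3 * amK (X 1) : KF) ≠ 0 := by
  intro h
  have : amK (X 0 + 3 * X 1) = 0 := by rw [map_add, map_mul, map_ofNat]; exact h
  have h0 : (X 0 + 3 * X 1 : R2) = 0 := amK_inj (by rw [this, map_zero])
  have := congrArg (eval (fun _ => (1:ℚ))) h0
  norm_num at this


lemma φ2_h2p : φ2 h2p = 0 := by
  unfold h2p
  simp only [map_add, map_mul, map_ofNat, φ2_X0, φ2_X2, φ2_X3]
  have hd := denom_ne
  field_simp
  ring

lemma φ2_ι2 (r : R2) : φ2 (ι2 r) = amK r := by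
  have : φ2.comp (ι2.toRingHom) = amK := by
    apply MvPolynomial.ringHom_ext
    · intro a
      show φ2 (ι2 (C a)) = amK (C a)
      rw [hιC, φ2_C, amK_C]
    · intro i
      fin_cases i <;>
        simp only [Fin.zero_eta, Fin.mk_one]
      · show φ2 (ι2 (X 0)) = amK (X 0)
        rw [hι0, φ2_X0]
      · show φ2 (ι2 (X 1)) = amK (X 1)
        rw [hι1, φ2_X2]
  calc φ2 (ι2 r) = φ2.comp (ι2.toRingHom) r := rfl
  _ = amK r := by rw [this]

lemma ker_φ2 : RingHom.ker φ2 = I2 := by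
  apply le_antisymm
  · intro f hf
    rw [RingHom.mem_ker] at hf
    obtain ⟨N, A, Q, r, hdiv⟩ := div_lemma f
    have happ := congrArg φ2 hdiv
    rw [map_add, map_add, map_mul, map_mul, map_mul, map_pow, hf, mul_zero,
      φ2_g2p, φ2_h2p, mul_zero, mul_zero, add_zero, zero_add, φ2_ι2] at happ
    have hr : r = 0 := amK_inj (by rw [← happ, map_zero])
    rw [hr, map_zero, add_zero] at hdiv
    exact sat N f (hdiv ▸ Ideal.mem_span_pair.mpr ⟨A, Q, rfl⟩)
  · rw [I2, Ideal.span_le]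
    rintro x (rfl | rfl) <;> rw [SetLike.mem_coe, RingHom.mem_ker]
    · exact φ2_g2p
    · exact φ2_h2p

lemma I2_prime : I2.IsPrime := by
  rw [← ker_φ2]
  exact RingHom.ker_isPrime φ2






def σ1 : R4 →ₐ[ℚ] R4 := aeval ![0, X 1, X 2, 0]
def σ3 : R4 →ₐ[ℚ] R4 := aeval ![X 3, C (3/2 : ℚ) * X 2 + C (1/2 : ℚ) * X 3, X 2, X 3]

def I1 : Ideal R4 := Ideal.span {X 0, X 3}
def I3 : Ideal R4 := Ideal.span {2 * X 1 - 3 * X 2 - X 3, X 0 - X 3}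

lemma σ1_X0 : σ1 (X 0) = 0 := by simp [σ1]
lemma σ1_X1 : σ1 (X 1) = X 1 := by simp [σ1]
lemma σ1_X2 : σ1 (X 2) = X 2 := by simp [σ1]
lemma σ1_X3 : σ1 (X 3) = 0 := by simp [σ1]
lemma σ3_X0 : σ3 (X 0) = X 3 := by simp [σ3]
lemma σ3_X1 : σ3 (X 1) = C (3/2 : ℚ) * X 2 + C (1/2 : ℚ) * X 3 := by simp [σ3]
lemma σ3_X2 : σ3 (X 2) = X 2 := by simp [σ3]
lemma σ3_X3 : σ3 (X 3) = X 3 := by simp [σ3]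

lemma ker_σ1 : RingHom.ker σ1.toRingHom = I1 := by
  apply le_antisymm
  · intro f hf
    rw [RingHom.mem_ker] at hf
    have h1 : f - σ1 f ∈ Ideal.span (Set.range fun i => (X i : R4) - ![0, X 1, X 2, 0] i) :=
      sub_aeval_mem _ f
    have h2 : f = f - σ1 f := by rw [show σ1.toRingHom f = σ1 f from rfl] at hf; rw [hf, sub_zero]
    rw [h2]
    refine Ideal.span_le.mpr ?_ h1
    rintro _ ⟨i, rfl⟩
    fin_cases i <;>
      simp only [Fin.zero_eta, Fin.mk_one, show (⟨2, by omega⟩ : Fin 4) = 2 from rfl,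
        show (⟨3, by omega⟩ : Fin 4) = 3 from rfl, Matrix.cons_val_zero, Matrix.cons_val_one,
        Matrix.head_cons, Matrix.cons_val_two, Matrix.tail_cons, Matrix.cons_val_three,
        sub_self, sub_zero, SetLike.mem_coe]
    · exact Ideal.subset_span (Set.mem_insert _ _)
    · exact Ideal.zero_mem _
    · exact Ideal.zero_mem _
    · exact Ideal.subset_span (Set.mem_insert_of_mem _ rfl)
  · rw [I1, Ideal.span_le]
    rintro x (rfl | rfl) <;> rw [SetLike.mem_coe, RingHom.mem_ker]
    · exact σ1_X0
    · exact σ1_X3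

lemma ker_σ3 : RingHom.ker σ3.toRingHom = I3 := by
  apply le_antisymm
  · intro f hf
    rw [RingHom.mem_ker] at hf
    have h1 : f - σ3 f ∈ Ideal.span (Set.range fun i =>
        (X i : R4) - ![X 3, C (3/2 : ℚ) * X 2 + C (1/2 : ℚ) * X 3, X 2, X 3] i) :=
      sub_aeval_mem _ f
    have h2 : f = f - σ3 f := by rw [show σ3.toRingHom f = σ3 f from rfl] at hf; rw [hf, sub_zero]
    rw [h2]
    refine Ideal.span_le.mpr ?_ h1
    rintro _ ⟨i, rfl⟩
    fin_cases i <;>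
      simp only [Fin.zero_eta, Fin.mk_one, show (⟨2, by omega⟩ : Fin 4) = 2 from rfl,
        show (⟨3, by omega⟩ : Fin 4) = 3 from rfl, Matrix.cons_val_zero, Matrix.cons_val_one,
        Matrix.head_cons, Matrix.cons_val_two, Matrix.tail_cons, Matrix.cons_val_three,
        sub_self, SetLike.mem_coe]
    · exact Ideal.subset_span (Set.mem_insert_of_mem _ rfl)
    · refine Ideal.mem_span_pair.mpr ⟨C (1/2 : ℚ), 0, ?_⟩
      linear_combination (X 1 : R4) * hC2 + (X 2 : R4) * hC32
    · exact Ideal.zero_mem _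
    · exact Ideal.zero_mem _
  · rw [I3, Ideal.span_le]
    rintro x (rfl | rfl) <;> rw [SetLike.mem_coe, RingHom.mem_ker]
    · show σ3 (2 * X 1 - 3 * X 2 - X 3) = 0
      rw [map_sub, map_sub, map_mul, map_mul, σ3_X1, σ3_X2, σ3_X3, map_ofNat, map_ofNat]
      linear_combination (2 * X 2 : R4) * hC32 + (3 * X 2 + X 3 : R4) * hC2
    · show σ3 (X 0 - X 3) = 0
      rw [map_sub, σ3_X0, σ3_X3, sub_self]

lemma I1_prime : I1.IsPrime := by
  rw [← ker_σ1]; exact RingHom.ker_isPrime _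
lemma I3_prime : I3.IsPrime := by
  rw [← ker_σ3]; exact RingHom.ker_isPrime _

-- main equality
def q1 : R4 := 2 * X 3 * (X 0 + X 1) - 3 * X 0 * (X 2 + X 3)
def q2 : R4 := 3 * X 3 * (X 0 + X 2) - 2 * X 0 * (X 1 + X 3)

lemma main_eq : Ideal.span {q1, q2} = I1 ⊓ I2 ⊓ I3 := by
  apply le_antisymm
  · rw [Ideal.span_le]
    rintro x (rfl | rfl) <;> rw [SetLike.mem_coe] <;>
      refine Submodule.mem_inf.mpr ⟨Submodule.mem_inf.mpr ⟨?_, ?_⟩, ?_⟩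
    · exact Ideal.mem_span_pair.mpr ⟨-3 * X 2 - X 3, 2 * X 1, by unfold q1; ring⟩
    · exact Ideal.mem_span_pair.mpr ⟨X 3, -1, by unfold q1 g2p h2p; ring⟩
    · exact Ideal.mem_span_pair.mpr ⟨X 3, -(3 * X 2 + X 3), by unfold q1; ring⟩
    · exact Ideal.mem_span_pair.mpr ⟨-2 * X 1 + X 3, 3 * X 2, by unfold q2; ring⟩
    · exact Ideal.mem_span_pair.mpr ⟨-X 0, 1, by unfold q2 g2p h2p; ring⟩
    · exact Ideal.mem_span_pair.mpr ⟨-X 0, -3 * X 2, by unfold q2; ring⟩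
  · intro f hf
    obtain ⟨⟨hf1, hf2⟩, hf3⟩ := Submodule.mem_inf.mp hf |>.imp Submodule.mem_inf.mp id
    -- f = A * g2p + B * h2p
    obtain ⟨A, B, hAB⟩ := Ideal.mem_span_pair.mp hf2
    set Cc : R4 := A + B * X 0 with hCc
    have hσ1f : σ1 f = 0 := by
      have := ker_σ1 ▸ hf1
      rwa [RingHom.mem_ker] at this
    have hσ3f : σ3 f = 0 := by
      have := ker_σ3 ▸ hf3
      rwa [RingHom.mem_ker] at this
    have hCg2 : Cc * g2p = f - B * q2 := by
      unfold g2p h2p at hAB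
      unfold q2 g2p
      linear_combination hAB
    -- σ3 C = 0
    have hσ3g2 : σ3 g2p = 6 * X 2 + X 3 := by
      unfold g2p
      rw [map_add, map_mul, map_mul, σ3_X1, σ3_X2, map_ofNat, map_ofNat]
      linear_combination (2 * X 2 : R4) * hC32 + (3 * X 2 + X 3 : R4) * hC2
    have hσ3q2 : σ3 q2 = 0 := by
      unfold q2
      rw [map_sub, map_mul, map_mul, map_mul, map_mul, map_add, map_add,
        σ3_X0, σ3_X1, σ3_X2, σ3_X3, map_ofNat, map_ofNat]
      linear_combination (-(2 * X 2 * X 3) : R4) * hC32 - (3 * X 2 * X 3 + X 3 * X 3 : R4) * hC2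
    have hσ3C : σ3 Cc = 0 := by
      have := congrArg σ3 hCg2
      rw [map_mul, map_sub, map_mul, hσ3f, hσ3q2, mul_zero, zero_sub, neg_zero, hσ3g2] at this
      rcases mul_eq_zero.mp this with h | h
      · exact h
      · exfalso
        have := congrArg (eval fun _ => (1:ℚ)) h
        norm_num at this
    -- C ∈ I3
    have hCI3 : Cc ∈ I3 := by
      rw [← ker_σ3, RingHom.mem_ker]
      exact hσ3C
    obtain ⟨D, E, hDE⟩ := Ideal.mem_span_pair.mp hCI3
    -- σ1 C = 0
    have hσ1q2 : σ1 q2 = 0 := by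
      unfold q2
      rw [map_sub, map_mul, map_mul, map_mul, map_mul, map_add, map_add,
        σ1_X0, σ1_X1, σ1_X2, σ1_X3, map_ofNat, map_ofNat]
      ring
    have hσ1g2 : σ1 g2p = 2 * X 1 + 3 * X 2 := by
      unfold g2p
      rw [map_add, map_mul, map_mul, σ1_X1, σ1_X2, map_ofNat, map_ofNat]
    have hσ1C : σ1 Cc = 0 := by
      have := congrArg σ1 hCg2
      rw [map_mul, map_sub, map_mul, hσ1f, hσ1q2, mul_zero, zero_sub, neg_zero, hσ1g2] at this
      rcases mul_eq_zero.mp this with h | h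
      · exact h
      · exfalso
        have := congrArg (eval fun _ => (1:ℚ)) h
        norm_num at this
    -- σ1 D = 0, hence D ∈ I1
    have hσ1D : σ1 D = 0 := by
      have := congrArg σ1 hDE
      rw [map_add, map_mul, map_mul, map_sub, map_sub, map_sub, map_mul, map_mul,
        σ1_X0, σ1_X1, σ1_X2, σ1_X3, hσ1C, map_ofNat, map_ofNat, sub_zero, sub_zero] at this
      -- this : σ1 D * (2 * X 1 - 3 * X 2) + σ1 E * -0 = 0  (approximately)
      have h2 : σ1 D * (2 * X 1 - 3 * X 2) = 0 := by linear_combination this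
      rcases mul_eq_zero.mp h2 with h | h
      · exact h
      · exfalso
        have := congrArg (eval ![0, 1, 0, 0]) h
        norm_num [Matrix.cons_val_two, Matrix.tail_cons, Matrix.head_cons] at this
    have hDI1 : D ∈ I1 := by
      rw [← ker_σ1, RingHom.mem_ker]
      exact hσ1D
    obtain ⟨P, Q, hPQ⟩ := Ideal.mem_span_pair.mp hDI1
    -- final certificate
    refine Ideal.mem_span_pair.mpr
      ⟨3 * X 2 * P + Q * g2p - Q * (3 * X 2 + X 3) - E,
       -P * g2p + 3 * X 2 * P - Q * (3 * X 2 + X 3) - E + B, ?_⟩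
    rw [hCc] at hDE
    unfold q1 q2 g2p h2p at *
    linear_combination hAB + (2 * X 1 + 3 * X 2 : R4) * hDE +
      ((2 * X 1 + 3 * X 2) * (2 * X 1 - 3 * X 2 - X 3) : R4) * hPQ

end
end BoSAux

/-- The ideal of the Spohn variety of the Bach-or-Stravinsky
game is the intersection of three prime ideals. -/
theorem bach_stravinsky_primary_decomposition :
    (Ideal.span {2 * r22 * (r11 + r12) - 3 * r11 * (r21 + r22),
                 3 * r22 * (r11 + r21) - 2 * r11 * (r12 + r22)}
      = Ideal.span {r11, r22}
        ⊓ Ideal.span {2 * r12 + 3 * r21,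
            3 * r11 * r21 + r11 * r22 + 3 * r21 * r22}
        ⊓ Ideal.span {2 * r12 - 3 * r21 - r22, r11 - r22}) ∧
    (Ideal.span {r11, r22} : Ideal (MvPolynomial (Fin 4) ℚ)).IsPrime ∧
    (Ideal.span {2 * r12 + 3 * r21,
        3 * r11 * r21 + r11 * r22 + 3 * r21 * r22} :
      Ideal (MvPolynomial (Fin 4) ℚ)).IsPrime ∧
    (Ideal.span {2 * r12 - 3 * r21 - r22, r11 - r22} :
      Ideal (MvPolynomial (Fin 4) ℚ)).IsPrime := by
  exact ⟨BoSAux.main_eq, BoSAux.I1_prime, BoSAux.I2_prime, BoSAux.I3_prime⟩
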